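/- arXiv:2304.09305 — 5 statements merged into one kernel-verified Lean document; each statement's English description precedes it below -/
import Mathlib

section
/- For any vector η ∈ ℝ^K, the Hessian of the multinomial log-partition function A(η) = log(1 + Σ_{k=1}^K e^{η_k}) has minimum eigenvalue at least (min_j e^{η_j}) / (1 + Σ_{l=1}^K e^{η_l})^2. -/
open Real Finset

/-- Minimum-eigenvalue lower bound for the Hessian of the multinomial
log-partition function `A(η) = log(1 + ∑ e^{η_k})`: for every unit vector `v`,
`vᵀ ∇²A(η) v ≥ (min_j e^{η_j}) / (1 + ∑_l e^{η_l})²`. -/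
theorem hessian_logpartition_min_eigenvalue
    (K : ℕ) (hK : 0 < K) (η : Fin K → ℝ)
    (H : Matrix (Fin K) (Fin K) ℝ)
    (hH : ∀ j k, H j k = (Real.exp (η j) / (1 + ∑ l, Real.exp (η l))) *
      ((if j = k then (1 : ℝ) else 0) - Real.exp (η k) / (1 + ∑ l, Real.exp (η l))))
    (v : Fin K → ℝ) (hv : ∑ j, v j ^ 2 = 1) :
    (Finset.univ.inf' (Finset.univ_nonempty_iff.mpr ⟨⟨0, hK⟩⟩) fun j => Real.exp (η j)) /
      (1 + ∑ l, Real.exp (η l)) ^ 2 ≤ ∑ j, ∑ k, v j * H j k * v k := by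
  set S : ℝ := 1 + ∑ l, Real.exp (η l) with hSdef
  have hS : 0 < S := by
    have : (0:ℝ) ≤ ∑ l, Real.exp (η l) :=
      Finset.sum_nonneg fun l _ => (Real.exp_pos _).le
    linarith
  set p : Fin K → ℝ := fun j => Real.exp (η j) / S with hpdef
  have hp0 : ∀ j, 0 ≤ p j := fun j => div_nonneg (Real.exp_pos _).le hS.le
  -- rewrite the quadratic form
  have key : ∑ j, ∑ k, v j * H j k * v k
      = (∑ j, p j * v j ^ 2) - (∑ j, p j * v j) ^ 2 := by
    have hrow : ∀ j : Fin K, ∑ k, v j * H j k * v k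
        = p j * v j ^ 2 - (p j * v j) * ∑ k, p k * v k := by
      intro j
      have h1 : ∀ k, v j * H j k * v k
          = (if j = k then v j * p j * v k else 0) - (p j * v j) * (p k * v k) := by
        intro k
        rw [hH j k]
        split_ifs <;> simp [p] <;> ring
      simp only [h1, Finset.sum_sub_distrib, Finset.sum_ite_eq, Finset.mem_univ, if_true,
        ← Finset.mul_sum]
      ring
    rw [Finset.sum_congr rfl fun j _ => hrow j, Finset.sum_sub_distrib, ← Finset.sum_mul]
    ring
  rw [key]
  set m : ℝ := Finset.univ.inf' (Finset.univ_nonempty_iff.mpr ⟨⟨0, hK⟩⟩)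
    (fun j => Real.exp (η j)) with hmdef
  have hm0 : 0 ≤ m := by
    obtain ⟨j, _, hj⟩ := Finset.exists_mem_eq_inf' (Finset.univ_nonempty_iff.mpr ⟨⟨0, hK⟩⟩)
      (fun j => Real.exp (η j))
    rw [hmdef, hj]; exact (Real.exp_pos _).le
  set Q : ℝ := ∑ j, p j * v j ^ 2 with hQdef
  have hQ0 : 0 ≤ Q := Finset.sum_nonneg fun j _ => mul_nonneg (hp0 j) (sq_nonneg _)
  -- sum of p is ≤ 1 - 1/S
  have hsump : ∑ j, p j = 1 - 1 / S := by
    rw [hpdef]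
    simp only
    rw [← Finset.sum_div]
    field_simp
    rw [hSdef]; ring
  -- Cauchy-Schwarz
  have cauchy : (∑ j, p j * v j) ^ 2 ≤ (∑ j, p j) * Q := by
    have := Finset.sum_mul_sq_le_sq_mul_sq Finset.univ
      (fun j => Real.sqrt (p j)) (fun j => Real.sqrt (p j) * v j)
    calc (∑ j, p j * v j) ^ 2
        = (∑ j, Real.sqrt (p j) * (Real.sqrt (p j) * v j)) ^ 2 := by
          congr 1; apply Finset.sum_congr rfl; intro j _
          rw [← mul_assoc, Real.mul_self_sqrt (hp0 j)]
      _ ≤ (∑ j, Real.sqrt (p j) ^ 2) * (∑ j, (Real.sqrt (p j) * v j) ^ 2) := this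
      _ = (∑ j, p j) * Q := by
          congr 1
          · exact Finset.sum_congr rfl fun j _ => Real.sq_sqrt (hp0 j)
          · apply Finset.sum_congr rfl; intro j _
            rw [mul_pow, Real.sq_sqrt (hp0 j)]
  -- lower bound on Q
  have hQm : m / S ≤ Q := by
    calc m / S = ∑ j, (m / S) * v j ^ 2 := by rw [← Finset.mul_sum, hv, mul_one]
      _ ≤ ∑ j, p j * v j ^ 2 := by
          apply Finset.sum_le_sum; intro j _
          apply mul_le_mul_of_nonneg_right _ (sq_nonneg _)
          have hle : m ≤ Real.exp (η j) := Finset.inf'_le _ (Finset.mem_univ j)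
          show m / S ≤ Real.exp (η j) / S
          gcongr
      _ = Q := rfl
  have hcs : (∑ j, p j * v j) ^ 2 ≤ (1 - 1 / S) * Q := by rw [← hsump]; exact cauchy
  have hfinal : m / S ^ 2 ≤ Q / S := by
    rw [sq, ← div_div]; gcongr
  have hQS : Q / S = Q - (1 - 1 / S) * Q := by field_simp; ring
  linarith
end

section
/- For any vector η ∈ ℝ^K, the Hessian of A(η) = log(1 + Σ_{k=1}^K e^{η_k}) has maximum eigenvalue at most 1. -/
open Real Finset

/-- Maximum-eigenvalue upper bound for the Hessian of
`A(η) = log(1 + ∑ e^{η_k})`: for every unit vector `v`, `vᵀ ∇²A(η) v ≤ 1`. -/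
theorem hessian_logpartition_max_eigenvalue
    (K : ℕ) (η : Fin K → ℝ)
    (H : Matrix (Fin K) (Fin K) ℝ)
    (hH : ∀ j k, H j k = (Real.exp (η j) / (1 + ∑ l, Real.exp (η l))) *
      ((if j = k then (1 : ℝ) else 0) - Real.exp (η k) / (1 + ∑ l, Real.exp (η l))))
    (v : Fin K → ℝ) (hv : ∑ j, v j ^ 2 = 1) :
    ∑ j, ∑ k, v j * H j k * v k ≤ 1 := by
  set S : ℝ := 1 + ∑ l, Real.exp (η l) with hS
  have hSpos : 0 < S := by
    have : (0:ℝ) ≤ ∑ l, Real.exp (η l) :=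
      Finset.sum_nonneg fun l _ => (Real.exp_pos _).le
    linarith
  set p : Fin K → ℝ := fun j => Real.exp (η j) / S with hp
  have hp0 : ∀ j, 0 ≤ p j := fun j => div_nonneg (Real.exp_pos _).le hSpos.le
  have hp1 : ∀ j, p j ≤ 1 := by
    intro j
    rw [hp, div_le_one hSpos]
    have : Real.exp (η j) ≤ ∑ l, Real.exp (η l) :=
      Finset.single_le_sum (fun l _ => (Real.exp_pos _).le) (Finset.mem_univ j)
    linarith
  have key : ∑ j, ∑ k, v j * H j k * v k
      = (∑ j, p j * v j ^ 2) - (∑ j, p j * v j) ^ 2 := by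
    have expand : ∀ j k : Fin K, v j * H j k * v k
        = (if j = k then p j * v j ^ 2 else 0) - (p j * v j) * (p k * v k) := by
      intro j k
      rw [hH j k]
      by_cases h : j = k
      · subst h; simp only [eq_self_iff_true, if_true, hp]; ring
      · simp only [if_neg h, hp]; ring
    have h1 : ∀ j : Fin K, ∑ k, (if j = k then p j * v j ^ 2 else 0) = p j * v j ^ 2 := by
      intro j; simp
    calc ∑ j, ∑ k, v j * H j k * v k
        = ∑ j, ((∑ k, (if j = k then p j * v j ^ 2 else 0))
            - ∑ k, (p j * v j) * (p k * v k)) := by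
          simp only [expand, Finset.sum_sub_distrib]
      _ = (∑ j, p j * v j ^ 2) - ∑ j, ∑ k, (p j * v j) * (p k * v k) := by
          rw [Finset.sum_sub_distrib]; simp [h1]
      _ = (∑ j, p j * v j ^ 2) - (∑ j, p j * v j) ^ 2 := by
          rw [sq, Finset.sum_mul_sum]
  rw [key]
  have h2 : (∑ j, p j * v j ^ 2) ≤ ∑ j, v j ^ 2 :=
    Finset.sum_le_sum fun j _ => by nlinarith [hp0 j, hp1 j, sq_nonneg (v j)]
  nlinarith [sq_nonneg (∑ j, p j * v j)]
end

section
/- Let f : ℝ^K → ℝ^K be defined by f(u)_k = u_k + c_k − log(1 + Σ_{j=1}^K e^{u_j}) for constants c_k, so that ∇f(u) = I_K − 1_K ∇A(u)ᵀ where A(u) = log(1 + Σ_j e^{u_j}). Then for any v ∈ ℝ^K, the minimum eigenvalue of ∇f(v)ᵀ∇f(v) is at least (1 + √K (Σ_{j=1}^K e^{2 v_j})^{1/2})^{-2}. -/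
open Real Finset

set_option maxHeartbeats 1000000 in
/-- With `∇f(v) = I_K − 1_K ∇A(v)ᵀ` for `A(v) = log(1 + ∑ e^{v_j})`, the
minimum eigenvalue of `∇f(v)ᵀ∇f(v)` is at least
`(1 + √K (∑_j e^{2 v_j})^{1/2})⁻²`, i.e. `‖∇f(v) z‖² ≥ bound · ‖z‖²` for all `z`. -/
theorem grad_f_gram_min_eigenvalue
    (K : ℕ) (v : Fin K → ℝ)
    (p : Fin K → ℝ) (hp : ∀ j, p j = Real.exp (v j) / (1 + ∑ l, Real.exp (v l)))
    (M : Matrix (Fin K) (Fin K) ℝ)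
    (hM : ∀ j k, M j k = (if j = k then (1 : ℝ) else 0) - p k)
    (z : Fin K → ℝ) :
    ((1 + Real.sqrt K * Real.sqrt (∑ j, Real.exp (2 * v j)))⁻¹) ^ 2 * ∑ j, z j ^ 2
      ≤ ∑ j, (∑ k, M j k * z k) ^ 2 := by
  set S : ℝ := 1 + ∑ l, Real.exp (v l) with hSdef
  have hSpos : (0 : ℝ) < S := by positivity
  set s : ℝ := ∑ k, p k * z k with hsdef
  -- rewrite the matrix-vector product
  have hMz : ∀ j, (∑ k, M j k * z k) = z j - s := by
    intro j
    have : ∀ k, M j k * z k = (if j = k then z k else 0) - p k * z k := by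
      intro k; rw [hM]; split <;> ring
    simp_rw [this, Finset.sum_sub_distrib, Finset.sum_ite_eq, Finset.mem_univ, if_pos]
    rw [hsdef]
  simp_rw [hMz]
  -- names
  set W : ℝ := ∑ j, (z j - s) ^ 2 with hWdef
  set T : ℝ := ∑ j, (z j - s) with hTdef
  set Q : ℝ := ∑ j, Real.exp (2 * v j) with hQdef
  set a : ℝ := Real.sqrt K with hadef
  set b : ℝ := Real.sqrt Q with hbdef
  have hQnn : (0 : ℝ) ≤ Q := by positivity
  have hWnn : (0 : ℝ) ≤ W := by positivity
  set r : ℝ := Real.sqrt W with hrdef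
  have ha2 : a ^ 2 = (K : ℝ) := by rw [hadef]; exact Real.sq_sqrt (Nat.cast_nonneg K)
  have hb2 : b ^ 2 = Q := by rw [hbdef]; exact Real.sq_sqrt hQnn
  have hr2 : r ^ 2 = W := by rw [hrdef]; exact Real.sq_sqrt hWnn
  have hann : (0 : ℝ) ≤ a := by rw [hadef]; exact Real.sqrt_nonneg _
  have hbnn : (0 : ℝ) ≤ b := by rw [hbdef]; exact Real.sqrt_nonneg _
  have hrnn : (0 : ℝ) ≤ r := by rw [hrdef]; exact Real.sqrt_nonneg _
  clear_value r b a Q T W s S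
  -- s in terms of w
  have hSp : ∀ k, S * p k = Real.exp (v k) := by
    intro k; rw [hp]; field_simp
  have hsum_p : ∑ k, p k = (∑ l, Real.exp (v l)) / S := by
    rw [Finset.sum_div]
    exact Finset.sum_congr rfl fun k _ => by rw [hp]
  have hsw : s = S * ∑ k, p k * (z k - s) := by
    have h1 : ∑ k, p k * (z k - s) = s - (∑ k, p k) * s := by
      simp_rw [mul_sub]
      rw [Finset.sum_sub_distrib, ← Finset.sum_mul, ← hsdef]
    rw [h1, hsum_p]
    field_simp
    rw [hSdef]
    ring
  -- Cauchy-Schwarz: s^2 ≤ Q * W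
  have hcs : (∑ k, p k * (z k - s)) ^ 2 ≤ (∑ k, p k ^ 2) * W := by
    rw [hWdef]
    exact Finset.sum_mul_sq_le_sq_mul_sq Finset.univ p (fun k => z k - s)
  have hSQ : S ^ 2 * ∑ k, p k ^ 2 = Q := by
    rw [Finset.mul_sum, hQdef]
    refine Finset.sum_congr rfl fun k _ => ?_
    have := hSp k
    have h2 : (S * p k) ^ 2 = Real.exp (v k) ^ 2 := by rw [this]
    rw [two_mul, Real.exp_add, ← sq]
    nlinarith [h2]
  have hs2 : s ^ 2 ≤ Q * W := by
    have hseq : s ^ 2 = (S * ∑ k, p k * (z k - s)) ^ 2 := by rw [← hsw]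
    calc s ^ 2 = S ^ 2 * (∑ k, p k * (z k - s)) ^ 2 := by rw [hseq]; ring
      _ ≤ S ^ 2 * ((∑ k, p k ^ 2) * W) := mul_le_mul_of_nonneg_left hcs (sq_nonneg S)
      _ = Q * W := by rw [← hSQ]; ring
  -- Cauchy-Schwarz with ones: T^2 ≤ K * W
  have hT2 : T ^ 2 ≤ (K : ℝ) * W := by
    have h := Finset.sum_mul_sq_le_sq_mul_sq Finset.univ (fun _ : Fin K => (1 : ℝ))
      (fun k => z k - s)
    simpa [hTdef, hWdef, Finset.card_univ] using h
  -- abs bounds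
  have hs_abs : |s| ≤ b * r := by
    have h1 : s ^ 2 ≤ (b * r) ^ 2 := by rw [mul_pow, hb2, hr2]; exact hs2
    calc |s| = Real.sqrt (s ^ 2) := (Real.sqrt_sq_eq_abs s).symm
      _ ≤ Real.sqrt ((b * r) ^ 2) := Real.sqrt_le_sqrt h1
      _ = b * r := Real.sqrt_sq (by positivity)
  have hT_abs : |T| ≤ a * r := by
    have h1 : T ^ 2 ≤ (a * r) ^ 2 := by rw [mul_pow, ha2, hr2]; exact hT2
    calc |T| = Real.sqrt (T ^ 2) := (Real.sqrt_sq_eq_abs T).symm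
      _ ≤ Real.sqrt ((a * r) ^ 2) := Real.sqrt_le_sqrt h1
      _ = a * r := Real.sqrt_sq (by positivity)
  -- decompose ∑ z^2
  have hZ : ∑ j, z j ^ 2 = W + 2 * s * T + (K : ℝ) * s ^ 2 := by
    have h1 : ∀ j, z j ^ 2 = (z j - s) ^ 2 + 2 * s * (z j - s) + s ^ 2 := fun j => by ring
    calc ∑ j, z j ^ 2 = ∑ j, ((z j - s) ^ 2 + 2 * s * (z j - s) + s ^ 2) :=
          Finset.sum_congr rfl fun j _ => h1 j
      _ = W + 2 * s * T + (K : ℝ) * s ^ 2 := by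
          rw [Finset.sum_add_distrib, Finset.sum_add_distrib, ← Finset.mul_sum,
            Finset.sum_const, Finset.card_univ, Fintype.card_fin, nsmul_eq_mul,
            ← hWdef, ← hTdef]
  -- key products
  have hST : s * T ≤ (b * r) * (a * r) := by
    calc s * T ≤ |s * T| := le_abs_self _
      _ = |s| * |T| := abs_mul s T
      _ ≤ (b * r) * (a * r) := mul_le_mul hs_abs hT_abs (abs_nonneg _) (by positivity)
  have hKs : (K : ℝ) * s ^ 2 ≤ a ^ 2 * (b * r) ^ 2 := by
    rw [← ha2] at *
    have h1 : s ^ 2 ≤ (b * r) ^ 2 := by rw [mul_pow, hb2, hr2]; exact hs2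
    exact mul_le_mul_of_nonneg_left h1 (sq_nonneg a)
  -- conclude
  rw [hZ, inv_pow, inv_mul_le_iff₀ (by positivity)]
  nlinarith [hr2, hST, hKs, mul_nonneg hann hbnn, sq_nonneg r, mul_nonneg (mul_nonneg hann hbnn) (sq_nonneg r)]
end

section
/- Ordinal link lower bound: define, for u ∈ ℝ^K with u_j < 0 for j > 1, p_j(u) = (1+e^{Σ_{l≤j+1} u_l})^{-1} − (1+e^{Σ_{l≤j} u_l})^{-1} for 1 ≤ j < K and p_K(u) = 1 − (1+e^{Σ_{l≤K} u_l})^{-1}. Then p_K(u) ≥ (1+e^{‖u‖₁})^{-1} and for 1 ≤ j < K, p_j(u) ≥ (−max_{k>1} u_k) · e^{‖u‖₁}/(1+e^{‖u‖₁})². -/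
open Real Finset

private lemma exp_diff_ge_aux (a b : ℝ) (h : b ≤ a) :
    (a - b) * Real.exp ((a + b) / 2) ≤ Real.exp a - Real.exp b := by
  have hs : (a - b) / 2 ≤ Real.sinh ((a - b) / 2) :=
    Real.self_le_sinh_iff.2 (by linarith)
  have hsinh : Real.sinh ((a - b) / 2) = (Real.exp ((a-b)/2) - Real.exp (-((a-b)/2))) / 2 :=
    Real.sinh_eq _
  have e1 : Real.exp ((a+b)/2) * Real.exp ((a-b)/2) = Real.exp a := by
    rw [← Real.exp_add]; ring_nf
  have e2 : Real.exp ((a+b)/2) * Real.exp (-((a-b)/2)) = Real.exp b := by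
    rw [← Real.exp_add]; ring_nf
  have hp := Real.exp_pos ((a+b)/2)
  nlinarith [hs, hsinh, e1, e2]

private lemma phi_le_aux (t n : ℝ) (h1 : t ≤ n) (h2 : -t ≤ n) :
    Real.exp t + Real.exp (-t) ≤ Real.exp n + Real.exp (-n) := by
  have hx := Real.exp_le_exp.2 h1
  have hy := Real.exp_le_exp.2 h2
  have h3 : Real.exp (-t) * Real.exp t = 1 := by rw [← Real.exp_add]; simp
  have h4 : Real.exp (-n) * Real.exp n = 1 := by rw [← Real.exp_add]; simp
  nlinarith [Real.exp_pos t, Real.exp_pos n, Real.exp_pos (-t), Real.exp_pos (-n),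
    mul_nonneg (sub_nonneg.2 hx) (sub_nonneg.2 (by
      nlinarith [mul_le_mul_of_nonneg_right hy (Real.exp_pos t).le, h3] :
      (1:ℝ) ≤ Real.exp n * Real.exp t))]

private lemma denom_aux (a n : ℝ) (ha : |a| ≤ n) :
    1 + Real.exp a = Real.exp (a/2) * (Real.exp (a/2) + Real.exp (-(a/2))) := by
  rw [mul_add, ← Real.exp_add, ← Real.exp_add]
  norm_num
  ring

private lemma key_aux (a b n M : ℝ) (ha : |a| ≤ n) (hb : |b| ≤ n)
    (hM0 : 0 ≤ -M) (hMab : -M ≤ a - b) :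
    (-M) * Real.exp n / (1 + Real.exp n) ^ 2 ≤ (1 + Real.exp b)⁻¹ - (1 + Real.exp a)⁻¹ := by
  have hea := Real.exp_pos a
  have heb := Real.exp_pos b
  have hen := Real.exp_pos n
  have hab : b ≤ a := by linarith
  -- rewrite RHS as a single fraction
  have h1 : (1 + Real.exp b)⁻¹ - (1 + Real.exp a)⁻¹
      = (Real.exp a - Real.exp b) / ((1 + Real.exp a) * (1 + Real.exp b)) := by
    rw [inv_sub_inv (by positivity) (by positivity)]
    ring_nf
  rw [h1, div_le_div_iff₀ (by positivity) (by positivity)]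
  -- denominator comparison : (1+e^a)(1+e^b) e^n ≤ e^{(a+b)/2} (1+e^n)^2
  have hA : Real.exp (a/2) + Real.exp (-(a/2)) ≤ Real.exp (n/2) + Real.exp (-(n/2)) := by
    have := abs_le.1 ha
    exact phi_le_aux (a/2) (n/2) (by linarith) (by linarith)
  have hB : Real.exp (b/2) + Real.exp (-(b/2)) ≤ Real.exp (n/2) + Real.exp (-(n/2)) := by
    have := abs_le.1 hb
    exact phi_le_aux (b/2) (n/2) (by linarith) (by linarith)
  have hAB : (Real.exp (a/2) + Real.exp (-(a/2))) * (Real.exp (b/2) + Real.exp (-(b/2)))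
      ≤ (Real.exp (n/2) + Real.exp (-(n/2))) ^ 2 := by
    rw [sq]; exact mul_le_mul hA hB (by positivity) (by positivity)
  have hna : 0 ≤ n := le_trans (abs_nonneg a) ha
  have ea : 1 + Real.exp a = Real.exp (a/2) * (Real.exp (a/2) + Real.exp (-(a/2))) :=
    denom_aux a n ha
  have eb : 1 + Real.exp b = Real.exp (b/2) * (Real.exp (b/2) + Real.exp (-(b/2))) :=
    denom_aux b n hb
  have en : 1 + Real.exp n = Real.exp (n/2) * (Real.exp (n/2) + Real.exp (-(n/2))) :=
    denom_aux n n (by rw [abs_of_nonneg hna])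
  have eab : Real.exp ((a+b)/2) = Real.exp (a/2) * Real.exp (b/2) := by
    rw [← Real.exp_add]; ring_nf
  have enn : Real.exp n = Real.exp (n/2) * Real.exp (n/2) := by
    rw [← Real.exp_add]; ring_nf
  have hden : (1 + Real.exp a) * (1 + Real.exp b) * Real.exp n
      ≤ Real.exp ((a+b)/2) * (1 + Real.exp n) ^ 2 := by
    rw [ea, eb, en, eab, enn, sq]
    have hpos : (0:ℝ) < Real.exp (a/2) * Real.exp (b/2) * (Real.exp (n/2) * Real.exp (n/2)) := by
      positivity
    calc Real.exp (a/2) * (Real.exp (a/2) + Real.exp (-(a/2))) *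
          (Real.exp (b/2) * (Real.exp (b/2) + Real.exp (-(b/2)))) *
          (Real.exp (n/2) * Real.exp (n/2))
        = (Real.exp (a/2) * Real.exp (b/2) * (Real.exp (n/2) * Real.exp (n/2))) *
          ((Real.exp (a/2) + Real.exp (-(a/2))) * (Real.exp (b/2) + Real.exp (-(b/2)))) := by ring
      _ ≤ (Real.exp (a/2) * Real.exp (b/2) * (Real.exp (n/2) * Real.exp (n/2))) *
          ((Real.exp (n/2) + Real.exp (-(n/2))) ^ 2) :=
        mul_le_mul_of_nonneg_left hAB (le_of_lt hpos)
      _ = Real.exp (a/2) * Real.exp (b/2) *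
          (Real.exp (n/2) * (Real.exp (n/2) + Real.exp (-(n/2))) *
           (Real.exp (n/2) * (Real.exp (n/2) + Real.exp (-(n/2))))) := by ring
  -- numerator comparison
  have hnum : (-M) * Real.exp ((a+b)/2) ≤ Real.exp a - Real.exp b := by
    calc (-M) * Real.exp ((a+b)/2) ≤ (a - b) * Real.exp ((a+b)/2) := by
          exact mul_le_mul_of_nonneg_right hMab (Real.exp_pos _).le
      _ ≤ Real.exp a - Real.exp b := exp_diff_ge_aux a b hab
  calc (-M) * Real.exp n * ((1 + Real.exp a) * (1 + Real.exp b))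
      = (-M) * ((1 + Real.exp a) * (1 + Real.exp b) * Real.exp n) := by ring
    _ ≤ (-M) * (Real.exp ((a+b)/2) * (1 + Real.exp n) ^ 2) :=
      mul_le_mul_of_nonneg_left hden hM0
    _ = ((-M) * Real.exp ((a+b)/2)) * (1 + Real.exp n) ^ 2 := by ring
    _ ≤ (Real.exp a - Real.exp b) * (1 + Real.exp n) ^ 2 :=
      mul_le_mul_of_nonneg_right hnum (by positivity)

/-- Ordinal link lower bound. With 1-based indexing, partial sums
`s(m) = ∑_{l=1}^m u_l` and `‖u‖₁ = ∑_{l=1}^K |u_l|`, if `u_j < 0` for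
`2 ≤ j ≤ K`, then `p_K(u) = 1 − (1+e^{s(K)})⁻¹ ≥ (1+e^{‖u‖₁})⁻¹` and for
`1 ≤ j < K`,
`p_j(u) = (1+e^{s(j+1)})⁻¹ − (1+e^{s(j)})⁻¹ ≥ (−max_{k>1} u_k) e^{‖u‖₁}/(1+e^{‖u‖₁})²`. -/
theorem ordinal_link_lower_bound
    (K : ℕ) (hK : 2 ≤ K) (u : ℕ → ℝ)
    (hneg : ∀ j, 2 ≤ j → j ≤ K → u j < 0)
    (s : ℕ → ℝ) (hs : ∀ m, s m = ∑ l ∈ Finset.Icc 1 m, u l)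
    (n1 : ℝ) (hn1 : n1 = ∑ l ∈ Finset.Icc 1 K, |u l|) :
    ((1 + Real.exp n1)⁻¹ ≤ 1 - (1 + Real.exp (s K))⁻¹) ∧
    ∀ j, 1 ≤ j → j < K →
      (-(Finset.Icc 2 K).sup' (Finset.nonempty_Icc.mpr hK) u) *
          Real.exp n1 / (1 + Real.exp n1) ^ 2
        ≤ (1 + Real.exp (s (j + 1)))⁻¹ - (1 + Real.exp (s j))⁻¹ := by
  have hsabs : ∀ m, m ≤ K → |s m| ≤ n1 := by
    intro m hm
    rw [hs, hn1]
    calc |∑ l ∈ Finset.Icc 1 m, u l| ≤ ∑ l ∈ Finset.Icc 1 m, |u l| :=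
          Finset.abs_sum_le_sum_abs _ _
      _ ≤ ∑ l ∈ Finset.Icc 1 K, |u l| :=
          Finset.sum_le_sum_of_subset_of_nonneg
            (Finset.Icc_subset_Icc_right hm) (fun i _ _ => abs_nonneg _)
  constructor
  · -- part 1
    have hx := Real.exp_pos (s K)
    have hy := Real.exp_pos n1
    have h1 : Real.exp (-(s K)) ≤ Real.exp n1 := by
      apply Real.exp_le_exp.2
      have := (abs_le.1 (hsabs K le_rfl)).1
      linarith
    have hxy : 1 ≤ Real.exp (s K) * Real.exp n1 := by
      have h2 : Real.exp (-(s K)) * Real.exp (s K) = 1 := by rw [← Real.exp_add]; simp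
      nlinarith
    have h3 : 1 - (1 + Real.exp (s K))⁻¹ = Real.exp (s K) / (1 + Real.exp (s K)) := by
      field_simp
      ring
    rw [h3, inv_eq_one_div, div_le_div_iff₀ (by positivity) (by positivity)]
    nlinarith
  · -- part 2
    intro j hj1 hjK
    set M := (Finset.Icc 2 K).sup' (Finset.nonempty_Icc.mpr hK) u with hMdef
    have hmem : j + 1 ∈ Finset.Icc 2 K := Finset.mem_Icc.mpr ⟨by omega, by omega⟩
    have hMd : u (j + 1) ≤ M := Finset.le_sup' u hmem
    have hM0 : M ≤ 0 := by
      apply Finset.sup'_le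
      intro k hk
      exact (hneg k (Finset.mem_Icc.1 hk).1 (Finset.mem_Icc.1 hk).2).le
    have hsucc : s (j + 1) = s j + u (j + 1) := by
      rw [hs, hs, Finset.sum_Icc_succ_top (by omega : 1 ≤ j + 1)]
    have ha : |s j| ≤ n1 := hsabs j (by omega)
    have hb : |s (j+1)| ≤ n1 := hsabs (j+1) (by omega)
    have := key_aux (s j) (s (j+1)) n1 M ha hb (by linarith)
      (by rw [hsucc]; linarith)
    exact this
end

section
/- Lower-triangular cumulative-sum bound: for real numbers α_1,…,α_K > 0, p_1,…,p_K > 0, and any v ∈ ℝ^K, set ṽ_k = Σ_{j=1}^k v_j and w_j = (α_j ṽ_j − α_{j+1} ṽ_{j+1})/p_j for j < K, w_K = α_K ṽ_K / p_K (with α_{K+1}=0). If p_j ≤ 1 for all j, then ‖w‖₂² ≥ (1/K) Σ_{k=1}^K α_k² ṽ_k², and hence ‖w‖₂² ≥ (min_k α_k²/(4K)) ‖v‖₂². -/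
open Real Finset

lemma telescope_Icc (f : ℕ → ℝ) (k K : ℕ) (hk : k ≤ K + 1) :
    ∑ j ∈ Finset.Icc k K, (f j - f (j + 1)) = f k - f (K + 1) := by
  induction K with
  | zero => interval_cases k <;> simp
  | succ n ih =>
    rcases Nat.lt_or_ge k (n + 2) with h | h
    · have hk' : k ≤ n + 1 := by omega
      rw [Finset.sum_Icc_succ_top hk', ih hk']
      ring
    · have hk2 : k = n + 2 := by omega
      subst hk2
      rw [Finset.Icc_eq_empty (by omega)]
      simp

/-- Lower-triangular cumulative-sum bound. With 1-based indexing, partial sums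
`ṽ_k = ∑_{j=1}^k v_j`, `α_{K+1} = 0`, and
`w_j = (α_j ṽ_j − α_{j+1} ṽ_{j+1})/p_j` for `1 ≤ j ≤ K` (so `w_K = α_K ṽ_K/p_K`),
if `α_j, p_j > 0`, `p_j ≤ 1`, and `∑_{j=k}^K p_j² ≤ 1` for all `k`, then
`‖w‖₂² ≥ (1/K) ∑_k α_k² ṽ_k²` and `‖w‖₂² ≥ (min_k α_k²/(4K)) ‖v‖₂²`. -/
theorem cumulative_sum_lower_bound
    (K : ℕ) (hK : 1 ≤ K) (v α p : ℕ → ℝ)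
    (hα : ∀ j ∈ Finset.Icc 1 K, 0 < α j) (hα0 : α (K + 1) = 0)
    (hp : ∀ j ∈ Finset.Icc 1 K, 0 < p j)
    (hp1 : ∀ j ∈ Finset.Icc 1 K, p j ≤ 1)
    (hpsum : ∀ k ∈ Finset.Icc 1 K, ∑ j ∈ Finset.Icc k K, p j ^ 2 ≤ 1)
    (vt w : ℕ → ℝ)
    (hvt : ∀ k, vt k = ∑ j ∈ Finset.Icc 1 k, v j)
    (hw : ∀ j ∈ Finset.Icc 1 K, w j = (α j * vt j - α (j + 1) * vt (j + 1)) / p j) :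
    ((1 / (K : ℝ)) * ∑ k ∈ Finset.Icc 1 K, α k ^ 2 * vt k ^ 2
        ≤ ∑ j ∈ Finset.Icc 1 K, w j ^ 2) ∧
    (((Finset.Icc 1 K).inf' (Finset.nonempty_Icc.mpr hK) fun k => α k ^ 2) / (4 * K) *
        ∑ j ∈ Finset.Icc 1 K, v j ^ 2
      ≤ ∑ j ∈ Finset.Icc 1 K, w j ^ 2) := by
  set S := ∑ j ∈ Finset.Icc 1 K, w j ^ 2 with hS
  have hSnn : (0:ℝ) ≤ S := Finset.sum_nonneg fun j _ => sq_nonneg _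
  have hKpos : (0:ℝ) < K := by exact_mod_cast hK
  -- key pointwise bound
  have key : ∀ k ∈ Finset.Icc 1 K, α k ^ 2 * vt k ^ 2 ≤ S := by
    intro k hk
    rw [Finset.mem_Icc] at hk
    have hsub : Finset.Icc k K ⊆ Finset.Icc 1 K := by
      apply Finset.Icc_subset_Icc_left hk.1
    have htel : ∑ j ∈ Finset.Icc k K, (w j * p j) = α k * vt k := by
      have : ∑ j ∈ Finset.Icc k K, (w j * p j)
          = ∑ j ∈ Finset.Icc k K, ((α j * vt j) - (α (j+1) * vt (j+1))) := by
        apply Finset.sum_congr rfl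
        intro j hj
        have hj' := hsub hj
        rw [hw j hj']
        field_simp [(hp j hj').ne']
      rw [this, telescope_Icc (fun j => α j * vt j) k K (by omega)]
      simp [hα0]
    have hcs := Finset.sum_mul_sq_le_sq_mul_sq (Finset.Icc k K) w p
    rw [htel] at hcs
    have hps : ∑ j ∈ Finset.Icc k K, p j ^ 2 ≤ 1 :=
      hpsum k (Finset.mem_Icc.mpr ⟨hk.1, hk.2⟩)
    have hwnn : (0:ℝ) ≤ ∑ j ∈ Finset.Icc k K, w j ^ 2 :=
      Finset.sum_nonneg fun j _ => sq_nonneg _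
    calc α k ^ 2 * vt k ^ 2 = (α k * vt k) ^ 2 := by ring
      _ ≤ (∑ j ∈ Finset.Icc k K, w j ^ 2) * ∑ j ∈ Finset.Icc k K, p j ^ 2 := hcs
      _ ≤ (∑ j ∈ Finset.Icc k K, w j ^ 2) * 1 := by
          exact mul_le_mul_of_nonneg_left hps hwnn
      _ = ∑ j ∈ Finset.Icc k K, w j ^ 2 := mul_one _
      _ ≤ S := Finset.sum_le_sum_of_subset_of_nonneg hsub
          (fun j _ _ => sq_nonneg _)
  have part1 : (1 / (K : ℝ)) * ∑ k ∈ Finset.Icc 1 K, α k ^ 2 * vt k ^ 2 ≤ S := by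
    rw [div_mul_eq_mul_div, one_mul, div_le_iff₀ hKpos]
    calc ∑ k ∈ Finset.Icc 1 K, α k ^ 2 * vt k ^ 2
        ≤ ∑ k ∈ Finset.Icc 1 K, S := Finset.sum_le_sum key
      _ = K * S := by
          rw [Finset.sum_const, Nat.card_Icc]
          simp [nsmul_eq_mul]
      _ = S * K := mul_comm _ _
  refine ⟨part1, ?_⟩
  -- part 2
  set m := (Finset.Icc 1 K).inf' (Finset.nonempty_Icc.mpr hK) fun k => α k ^ 2 with hm
  have hmpos : 0 < m := by
    rw [hm, Finset.lt_inf'_iff]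
    intro k hk
    exact pow_pos (hα k hk) 2
  -- v_j = vt j - vt (j-1)
  have hv : ∀ j ∈ Finset.Icc 1 K, v j = vt j - vt (j - 1) := by
    intro j hj
    rw [Finset.mem_Icc] at hj
    obtain ⟨i, rfl⟩ : ∃ i, j = i + 1 := ⟨j - 1, by omega⟩
    rw [hvt, hvt]
    simp only [Nat.add_sub_cancel]
    rw [Finset.sum_Icc_succ_top (by omega : 1 ≤ i + 1)]
    ring
  have hv4 : ∑ j ∈ Finset.Icc 1 K, v j ^ 2 ≤ 4 * ∑ j ∈ Finset.Icc 1 K, vt j ^ 2 := by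
    have h1 : ∑ j ∈ Finset.Icc 1 K, v j ^ 2
        ≤ ∑ j ∈ Finset.Icc 1 K, (2 * vt j ^ 2 + 2 * vt (j - 1) ^ 2) := by
      apply Finset.sum_le_sum
      intro j hj
      rw [hv j hj]
      nlinarith [sq_nonneg (vt j + vt (j - 1))]
    have h2 : ∑ j ∈ Finset.Icc 1 K, vt (j - 1) ^ 2 ≤ ∑ j ∈ Finset.Icc 1 K, vt j ^ 2 := by
      calc ∑ j ∈ Finset.Icc 1 K, vt (j - 1) ^ 2
          = ∑ j ∈ Finset.Icc 0 (K - 1), vt j ^ 2 := by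
            rw [Finset.sum_bij' (fun j _ => j - 1) (fun j _ => j + 1)]
            · intro a ha; rw [Finset.mem_Icc] at *; omega
            · intro a ha; rw [Finset.mem_Icc] at *; omega
            · intro a ha; rw [Finset.mem_Icc] at ha; omega
            · intro a ha; rw [Finset.mem_Icc] at ha; omega
            · intro a ha; rfl
        _ = vt 0 ^ 2 + ∑ j ∈ Finset.Icc 1 (K - 1), vt j ^ 2 := by
            rw [show Finset.Icc 0 (K-1) = insert 0 (Finset.Icc 1 (K-1)) from ?_]
            · rw [Finset.sum_insert (by simp)]
            · ext x; simp [Finset.mem_Icc]; omega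
        _ ≤ ∑ j ∈ Finset.Icc 1 K, vt j ^ 2 := by
            have hvt0 : vt 0 = 0 := by rw [hvt]; simp
            rw [hvt0]
            simp only [ne_eq, OfNat.ofNat_ne_zero, not_false_eq_true, zero_pow, zero_add]
            apply Finset.sum_le_sum_of_subset_of_nonneg
            · apply Finset.Icc_subset_Icc_right; omega
            · intro j _ _; exact sq_nonneg _
    calc ∑ j ∈ Finset.Icc 1 K, v j ^ 2
        ≤ ∑ j ∈ Finset.Icc 1 K, (2 * vt j ^ 2 + 2 * vt (j - 1) ^ 2) := h1
      _ = 2 * ∑ j ∈ Finset.Icc 1 K, vt j ^ 2 + 2 * ∑ j ∈ Finset.Icc 1 K, vt (j-1) ^ 2 := by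
          rw [Finset.sum_add_distrib, Finset.mul_sum, Finset.mul_sum]
      _ ≤ 4 * ∑ j ∈ Finset.Icc 1 K, vt j ^ 2 := by nlinarith
  have hmin : m * ∑ j ∈ Finset.Icc 1 K, vt j ^ 2
      ≤ ∑ k ∈ Finset.Icc 1 K, α k ^ 2 * vt k ^ 2 := by
    rw [Finset.mul_sum]
    apply Finset.sum_le_sum
    intro k hk
    exact mul_le_mul_of_nonneg_right (Finset.inf'_le _ hk) (sq_nonneg _)
  calc m / (4 * K) * ∑ j ∈ Finset.Icc 1 K, v j ^ 2
      ≤ m / (4 * K) * (4 * ∑ j ∈ Finset.Icc 1 K, vt j ^ 2) := by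
        apply mul_le_mul_of_nonneg_left hv4
        positivity
    _ = (1 / K) * (m * ∑ j ∈ Finset.Icc 1 K, vt j ^ 2) := by
        field_simp
    _ ≤ (1 / K) * ∑ k ∈ Finset.Icc 1 K, α k ^ 2 * vt k ^ 2 := by
        apply mul_le_mul_of_nonneg_left hmin
        positivity
    _ ≤ S := part1
end
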